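/- arXiv:1710.11108 — 3 statements merged into one kernel-verified Lean document; each statement's English description precedes it below -/
import Mathlib

section
/- Fix c > 0 and s_0 > s_*, and suppose 0 ≤ -y_* ≤ c. Then there exists a_0 ≥ 0, depending only on c and s_0 - s_*, such that for all a > a_0 the solution y of the initial value problem y' = -a + y²/2, y(s_*) = y_*, satisfies -y(s) ≥ c for all s > s_0 (on its interval of existence). -/
/-- The inverse hyperbolic tangent. -/
noncomputable def artanh (x : ℝ) : ℝ := Real.log ((1 + x) / (1 - x)) / 2

lemma tanh_strictMono' : StrictMono Real.tanh := by
  intro x y hxy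
  rw [Real.tanh_eq_sinh_div_cosh, Real.tanh_eq_sinh_div_cosh,
    div_lt_div_iff₀ (Real.cosh_pos x) (Real.cosh_pos y)]
  have h : Real.sinh (x - y) < 0 := Real.sinh_neg_iff.2 (by linarith)
  rw [Real.sinh_sub] at h
  linarith

lemma tanh_one_pos : 0 < Real.tanh 1 := by
  rw [Real.tanh_eq_sinh_div_cosh]
  exact div_pos (Real.sinh_pos_iff.2 one_pos) (Real.cosh_pos 1)

lemma tanh_one_lt_one : Real.tanh 1 < 1 := by
  rw [Real.tanh_eq_sinh_div_cosh, div_lt_one (Real.cosh_pos 1)]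
  exact Real.sinh_lt_cosh 1

/-- For any `c > 0` and time gap `Δ = s₀ - sm > 0` there is `a₀ ≥ 0`, depending only on
`c` and `Δ`, such that for all `a > a₀` the explicit solution of `y' = -a + y²/2`,
`y sm = ym` with `0 ≤ -ym ≤ c` satisfies `-y s ≥ c` for all `s > s₀`. -/
theorem riccati_growth_estimate (c Δ : ℝ) (hc : 0 < c) (hΔ : 0 < Δ) :
    ∃ a₀ : ℝ, 0 ≤ a₀ ∧ ∀ sm s₀ ym : ℝ, s₀ - sm = Δ →
      0 ≤ -ym → -ym ≤ c → ∀ a : ℝ, a > a₀ →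
        ∀ s : ℝ, s > s₀ →
          c ≤ -(Real.sqrt (2 * a) *
            Real.tanh (Real.sqrt (a / 2) * (sm - s) + artanh (ym / Real.sqrt (2 * a)))) := by
  set T := Real.tanh 1 with hTdef
  have hT : 0 < T := tanh_one_pos
  have hT1 : T < 1 := tanh_one_lt_one
  refine ⟨max (2 / Δ ^ 2) (c ^ 2 / (2 * T ^ 2)), le_max_of_le_left (by positivity), ?_⟩
  intro sm s₀ ym hgap hym1 hym2 a ha s hs
  have ha1 : 2 / Δ ^ 2 < a := lt_of_le_of_lt (le_max_left _ _) ha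
  have ha2 : c ^ 2 / (2 * T ^ 2) < a := lt_of_le_of_lt (le_max_right _ _) ha
  have ha0 : 0 < a := lt_trans (by positivity) ha1
  -- c < sqrt(2a) * T
  have hcT : c < Real.sqrt (2 * a) * T := by
    have h1 : c / T < Real.sqrt (2 * a) := by
      rw [show c / T = Real.sqrt ((c / T) ^ 2) from (Real.sqrt_sq (by positivity)).symm]
      apply Real.sqrt_lt_sqrt (by positivity)
      rw [div_pow]
      rw [div_lt_iff₀ (by positivity)] at ha2 ⊢
      nlinarith
    calc c = (c / T) * T := by field_simp
    _ < Real.sqrt (2 * a) * T := by exact mul_lt_mul_of_pos_right h1 hT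
  have hcs : c < Real.sqrt (2 * a) := by
    calc c < Real.sqrt (2 * a) * T := hcT
    _ ≤ Real.sqrt (2 * a) * 1 := by
        exact mul_le_mul_of_nonneg_left hT1.le (Real.sqrt_nonneg _)
    _ = Real.sqrt (2 * a) := mul_one _
  have hs2a : 0 < Real.sqrt (2 * a) := lt_trans hc hcs
  -- sqrt(a/2) * Δ > 1
  have hsq : 1 / Δ < Real.sqrt (a / 2) := by
    rw [show (1:ℝ) / Δ = Real.sqrt ((1 / Δ) ^ 2) from (Real.sqrt_sq (by positivity)).symm]
    apply Real.sqrt_lt_sqrt (by positivity)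
    rw [div_pow, one_pow]
    rw [div_lt_iff₀ (by positivity)] at ha1 ⊢
    nlinarith
  have hsqΔ : 1 < Real.sqrt (a / 2) * Δ := by
    rw [div_lt_iff₀ hΔ] at hsq; linarith
  -- artanh term is nonpositive
  have hym0 : ym ≤ 0 := by linarith
  have hart : artanh (ym / Real.sqrt (2 * a)) ≤ 0 := by
    have hx1 : -1 < ym / Real.sqrt (2 * a) := by
      rw [lt_div_iff₀ hs2a]; nlinarith
    have hx0 : ym / Real.sqrt (2 * a) ≤ 0 := div_nonpos_of_nonpos_of_nonneg hym0 hs2a.le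
    unfold artanh
    have : Real.log ((1 + ym / Real.sqrt (2 * a)) / (1 - ym / Real.sqrt (2 * a))) ≤ 0 := by
      apply Real.log_nonpos
      · apply div_nonneg <;> linarith
      · rw [div_le_one (by linarith)]; linarith
    linarith
  -- the argument of tanh is ≤ -1
  have harg : Real.sqrt (a / 2) * (sm - s) + artanh (ym / Real.sqrt (2 * a)) ≤ -1 := by
    have h1 : sm - s ≤ -Δ := by linarith
    have h2 : Real.sqrt (a / 2) * (sm - s) ≤ Real.sqrt (a / 2) * (-Δ) :=
      mul_le_mul_of_nonneg_left h1 (Real.sqrt_nonneg _)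
    have h3 : Real.sqrt (a / 2) * (-Δ) ≤ -1 := by nlinarith
    linarith
  -- tanh(arg) ≤ tanh(-1) = -T
  have htanh : Real.tanh (Real.sqrt (a / 2) * (sm - s) + artanh (ym / Real.sqrt (2 * a)))
      ≤ -T := by
    have := tanh_strictMono'.monotone harg
    rwa [show Real.tanh (-1) = -T by rw [hTdef, Real.tanh_neg]] at this
  have : Real.sqrt (2 * a) *
      Real.tanh (Real.sqrt (a / 2) * (sm - s) + artanh (ym / Real.sqrt (2 * a)))
      ≤ Real.sqrt (2 * a) * (-T) := mul_le_mul_of_nonneg_left htanh (Real.sqrt_nonneg _)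
  nlinarith
end

section
/- Let u : [0,T) → ℝ be C², let h : (0,T) → ℝ be continuous, and suppose u satisfies the conservation law u''(t) + (−u'(t) + h(t))·u'(t) = C + ε·u(t) on (0,T), with ε ≥ 0, C < 0, u(0) = 0, u'(0) = 0, and suppose u'(t) < 0 for all sufficiently small t > 0. Then u'(t) < 0 and u(t) < 0 for all t ∈ (0,T). -/
/-- Monotonicity of the soliton potential: if `u` satisfies the conservation law
`u'' + (-u' + h)·u' = C + ε·u` with `ε ≥ 0`, `C < 0`, `u(0) = u'(0) = 0` and `u' < 0`
for small `t > 0`, then `u' < 0` and `u < 0` on all of `(0,T)`. -/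
theorem soliton_potential_decreasing (T ε C : ℝ) (hT : 0 < T) (hε : 0 ≤ ε) (hC : C < 0)
    (u h : ℝ → ℝ) (hu : ContDiff ℝ 2 u) (hh : ContinuousOn h (Set.Ioo 0 T))
    (hcons : ∀ t ∈ Set.Ioo 0 T,
      deriv (deriv u) t + (-(deriv u t) + h t) * deriv u t = C + ε * u t)
    (hu0 : u 0 = 0) (hu'0 : deriv u 0 = 0)
    (hsmall : ∃ δ > 0, ∀ t ∈ Set.Ioo 0 δ, deriv u t < 0) :
    ∀ t ∈ Set.Ioo 0 T, deriv u t < 0 ∧ u t < 0 := by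
  have hud : Differentiable ℝ u := hu.differentiable (by simp)
  have hu1 : ContDiff ℝ 1 (deriv u) :=
    (contDiff_succ_iff_deriv.mp (show ContDiff ℝ (1 + 1) u from by exact_mod_cast hu)).2.2
  have hu'd : Differentiable ℝ (deriv u) := hu1.differentiable one_ne_zero
  have hu'c : Continuous (deriv u) := hu'd.continuous
  obtain ⟨δ, hδ, hsm⟩ := hsmall
  have key : ∀ t ∈ Set.Ioo 0 T, deriv u t < 0 := by
    by_contra hcon
    push_neg at hcon
    obtain ⟨t, ht, ht0⟩ := hcon
    set S : Set ℝ := {s | s ∈ Set.Ioo 0 T ∧ 0 ≤ deriv u s} with hS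
    have hSne : S.Nonempty := ⟨t, ht, ht0⟩
    have hSbd : BddBelow S := ⟨0, fun s hs => le_of_lt hs.1.1⟩
    set t₀ := sInf S with ht₀def
    have hδle : ∀ s ∈ S, δ ≤ s := by
      intro s hs
      by_contra hlt
      push_neg at hlt
      exact absurd hs.2 (not_le.mpr (hsm s ⟨hs.1.1, hlt⟩))
    have ht₀pos : 0 < t₀ := lt_of_lt_of_le hδ (le_csInf hSne hδle)
    have ht₀ltT : t₀ < T := lt_of_le_of_lt (csInf_le hSbd ⟨ht, ht0⟩) ht.2
    have hneg : ∀ s ∈ Set.Ioo 0 t₀, deriv u s < 0 := by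
      intro s hs
      by_contra h'
      push_neg at h'
      exact absurd (csInf_le hSbd ⟨⟨hs.1, hs.2.trans ht₀ltT⟩, h'⟩) (not_le.mpr hs.2)
    have hcl : t₀ ∈ closure S := csInf_mem_closure hSne hSbd
    have hge : 0 ≤ deriv u t₀ := by
      have hsub : closure S ⊆ {s | 0 ≤ deriv u s} :=
        closure_minimal (fun s hs => hs.2) (isClosed_le continuous_const hu'c)
      exact hsub hcl
    have hNB : (nhdsWithin t₀ (Set.Ioo 0 t₀)).NeBot := by
      rw [mem_closure_iff_nhdsWithin_neBot.symm, closure_Ioo (ne_of_lt ht₀pos)]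
      exact ⟨ht₀pos.le, le_rfl⟩
    have hle : deriv u t₀ ≤ 0 := by
      have htend : Filter.Tendsto (deriv u) (nhdsWithin t₀ (Set.Ioo 0 t₀))
          (nhds (deriv u t₀)) := (hu'c.tendsto t₀).mono_left nhdsWithin_le_nhds
      exact le_of_tendsto htend
        (Filter.eventually_of_mem self_mem_nhdsWithin (fun s hs => (hneg s hs).le))
    have hu't₀ : deriv u t₀ = 0 := le_antisymm hle hge
    have hanti : StrictAntiOn u (Set.Icc 0 t₀) :=
      strictAntiOn_of_deriv_neg (convex_Icc 0 t₀) hud.continuous.continuousOn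
        (by rw [interior_Icc]; exact hneg)
    have hut₀ : u t₀ < 0 := by
      have := hanti ⟨le_rfl, ht₀pos.le⟩ ⟨ht₀pos.le, le_rfl⟩ ht₀pos
      rwa [hu0] at this
    have hd : HasDerivAt (deriv u) (deriv (deriv u) t₀) t₀ := (hu'd t₀).hasDerivAt
    have hslope := hasDerivAt_iff_tendsto_slope.mp hd
    have hmono : nhdsWithin t₀ (Set.Ioo 0 t₀) ≤ nhdsWithin t₀ {t₀}ᶜ :=
      nhdsWithin_mono _ (fun s hs => ne_of_lt hs.2)
    have hnn : 0 ≤ deriv (deriv u) t₀ := by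
      refine ge_of_tendsto (hslope.mono_left hmono)
        (Filter.eventually_of_mem self_mem_nhdsWithin (fun s hs => ?_))
      rw [slope_def_field, hu't₀]
      exact le_of_lt (div_pos_of_neg_of_neg (by simpa using hneg s hs)
        (sub_neg.mpr hs.2))
    have hc := hcons t₀ ⟨ht₀pos, ht₀ltT⟩
    rw [hu't₀] at hc
    have hεu : ε * u t₀ ≤ 0 := mul_nonpos_of_nonneg_of_nonpos hε hut₀.le
    nlinarith [hc, hnn]
  intro t ht
  refine ⟨key t ht, ?_⟩
  have hanti : StrictAntiOn u (Set.Icc 0 t) :=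
    strictAntiOn_of_deriv_neg (convex_Icc 0 t) hud.continuous.continuousOn
      (by rw [interior_Icc]; exact fun s hs => key s ⟨hs.1, hs.2.trans ht.2⟩)
  have := hanti ⟨le_rfl, ht.1.le⟩ ⟨ht.1.le, le_rfl⟩ ht.1
  rwa [hu0] at this
end

section
/- Let u : [0,T) → ℝ be C² and suppose there exists a > 0 such that u''(t) ≤ −a + u'(t)²/2 for all t ∈ [t_*, T), with 0 ≤ −u'(t_*) ≤ c for a given c > 0. Fix τ ∈ (t_*, T). If a > a_0, where a_0 ≥ 0 depends only on c and τ − t_*, then −u'(t) ≥ c for all t ∈ [τ, T). -/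
/-- Growth estimate for the soliton potential: for `c > 0` and a time gap `Δ = τ - tm > 0`
there is `a₀ ≥ 0`, depending only on `c` and `Δ`, such that whenever a `C²` function `u`
satisfies `u'' ≤ -a + (u')²/2` on `[tm, T)` with `a > a₀` and `0 ≤ -u'(tm) ≤ c`, then
`-u' ≥ c` on `[τ, T)`. -/
theorem potential_growth_estimate (c Δ : ℝ) (hc : 0 < c) (hΔ : 0 < Δ) :
    ∃ a₀ : ℝ, 0 ≤ a₀ ∧ ∀ (tm τ T a : ℝ) (u : ℝ → ℝ),
      τ - tm = Δ → τ < T → ContDiff ℝ 2 u → a > a₀ →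
      (∀ t ∈ Set.Ico tm T, deriv (deriv u) t ≤ -a + (deriv u t) ^ 2 / 2) →
      0 ≤ -(deriv u tm) → -(deriv u tm) ≤ c →
      ∀ t ∈ Set.Ico τ T, c ≤ -(deriv u t) := by
  refine ⟨c ^ 2 / 2 + c / Δ, by positivity, ?_⟩
  intro tm τ T a u hτ hτT hu ha hineq h0 hc'
  set v := deriv u with hv
  have hdv : Differentiable ℝ v := by
    have h1 : ContDiff ℝ ((1 : ℕ∞) + 1) u := by exact_mod_cast hu
    have := (contDiff_succ_iff_deriv.mp h1).2
    exact this.2.differentiable (by simp)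
  have hcv : Continuous v := hdv.continuous
  set b := a - c ^ 2 / 2 with hb
  have hbΔ : c / Δ < b := by simp only [hb]; linarith [ha]
  have hbpos : 0 < b := lt_trans (by positivity) hbΔ
  have hbΔc : c < b * Δ := by
    have := (div_lt_iff₀ hΔ).mp hbΔ
    linarith
  have htmτ : tm < τ := by linarith
  -- derivative bound when v is in (-c, c)
  have hderiv : ∀ t, tm ≤ t → t < T → -c ≤ v t → v t < c → deriv v t ≤ -b := by
    intro t ht1 ht2 h1 h2
    have h3 := hineq t ⟨ht1, ht2⟩
    have h4 : v t ^ 2 ≤ c ^ 2 := sq_le_sq' (by linarith) h2.le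
    simp only [hb]
    linarith
  -- Lemma B: levels L ∈ [-c, c) cannot be up-crossed
  have lemB : ∀ L : ℝ, -c ≤ L → L < c → ∀ t₀, tm ≤ t₀ → v t₀ ≤ L →
      ∀ t₁, t₀ ≤ t₁ → t₁ < T → v t₁ ≤ L := by
    intro L hL1 hL2 t₀ ht₀ hvt₀ t₁ ht₁ ht₁T
    by_contra hcon
    push_neg at hcon
    set S : Set ℝ := Set.Icc t₀ t₁ ∩ {t | v t ≤ L} with hS
    have hSne : S.Nonempty := ⟨t₀, ⟨le_rfl, ht₁⟩, hvt₀⟩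
    have hSbdd : BddAbove S := BddAbove.mono (Set.inter_subset_left) bddAbove_Icc
    have hScl : IsClosed S := isClosed_Icc.inter (isClosed_le hcv continuous_const)
    set s := sSup S with hs
    have hsS : s ∈ S := hScl.csSup_mem hSne hSbdd
    obtain ⟨⟨hs0, hs1⟩, hvs⟩ := hsS
    have hvsL : v s ≤ L := hvs
    have hst₁ : s < t₁ := lt_of_le_of_ne hs1
      (fun h => absurd (h ▸ hvsL) (not_le.mpr hcon))
    have hup : ∀ t, s < t → t ≤ t₁ → L < v t := by
      intro t h1 h2
      by_contra h3
      push_neg at h3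
      have : t ∈ S := ⟨⟨le_trans hs0 h1.le, h2⟩, h3⟩
      exact absurd (le_csSup hSbdd this) (not_le.mpr h1)
    -- continuity: find δ with v < c on [s, s+δ)
    have hvsc : v s < c := lt_of_le_of_lt hvsL hL2
    obtain ⟨δ, hδ0, hδ⟩ := Metric.continuousAt_iff.mp hcv.continuousAt (c - v s) (by linarith)
    set t := min (s + δ / 2) t₁ with ht
    have hst : s < t := lt_min (by linarith) hst₁
    have htt₁ : t ≤ t₁ := min_le_right _ _
    have htT : t < T := lt_of_le_of_lt htt₁ ht₁T
    -- MVT on [s, t]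
    obtain ⟨ξ, hξmem, hξ⟩ := exists_hasDerivAt_eq_slope v (deriv v) hst
      (hcv.continuousOn) (fun x _ => (hdv x).hasDerivAt)
    have hξL : L < v ξ := hup ξ hξmem.1 (le_trans hξmem.2.le htt₁)
    have hξc : v ξ < c := by
      have hdist : dist ξ s < δ := by
        rw [Real.dist_eq, abs_of_pos (by linarith [hξmem.1])]
        have : ξ < s + δ / 2 := lt_of_lt_of_le hξmem.2 (min_le_left _ _)
        linarith
      have := hδ hdist
      rw [Real.dist_eq] at this
      have := abs_lt.mp this
      linarith [this.1, this.2]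
    have hdb : deriv v ξ ≤ -b := hderiv ξ (le_trans (le_trans ht₀ hs0) hξmem.1.le)
      (lt_trans hξmem.2 htT) (by linarith) hξc
    rw [hξ] at hdb
    have hts : 0 < t - s := by linarith
    have : v t - v s ≤ -b * (t - s) := by
      have := (div_le_iff₀ hts).mp hdb
      linarith
    have hvt : v t < v s := by nlinarith
    exact absurd (hup t hst htt₁) (not_lt.mpr (by linarith))
  -- Step 1: v ≤ 0 on [tm, T)
  have hv0 : ∀ t, tm ≤ t → t < T → v t ≤ 0 :=
    lemB 0 (by linarith) hc tm le_rfl (by linarith)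
  -- Step 2: v hits -c somewhere in [tm, τ]
  have hhit : ∃ s, tm ≤ s ∧ s ≤ τ ∧ v s ≤ -c := by
    by_contra hcon
    push_neg at hcon
    obtain ⟨ξ, hξmem, hξ⟩ := exists_hasDerivAt_eq_slope v (deriv v) htmτ
      (hcv.continuousOn) (fun x _ => (hdv x).hasDerivAt)
    have hξT : ξ < T := lt_trans hξmem.2 hτT
    have h1 : -c < v ξ := hcon ξ hξmem.1.le hξmem.2.le
    have h2 : v ξ ≤ 0 := hv0 ξ hξmem.1.le hξT
    have hdb : deriv v ξ ≤ -b := hderiv ξ hξmem.1.le hξT h1.le (by linarith)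
    rw [hξ] at hdb
    have hΔ' : τ - tm = Δ := hτ
    have : (v τ - v tm) / Δ ≤ -b := by rwa [hΔ'] at hdb
    have hvτ : v τ - v tm ≤ -b * Δ := by
      have := (div_le_iff₀ hΔ).mp this
      linarith
    have hvtm : v tm ≤ 0 := by linarith
    have : v τ ≤ -b * Δ := by linarith
    have hτc : -c < v τ := hcon τ htmτ.le le_rfl
    nlinarith
  obtain ⟨s, hs1, hs2, hs3⟩ := hhit
  intro t ⟨htτ, htT⟩
  have := lemB (-c) le_rfl (by linarith) s hs1 hs3 t (le_trans hs2 htτ) htT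
  linarith
end
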